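/- Let γ₀(t) = (a₂t² + a₃t³ + …, b₃t³ + b₄t⁴ + …, c₃t³ + …) be a space cusp with a₂ ≠ 0 and b₃ ≠ 0, and let γ_s(t) = (a₂t² + a₃t³ + …, s₁t + b̄₂(s)t² + b₃t³ + …, s₂t + c̄₂(s)t² + c₃t³ + …) be the 2-parameter deformation with deformation parameters s = (s₁, s₂), b̄₂(0) = c̄₂(0) = 0. Then the flattening stratum at first order is the line s₂ = (c₃/b₃)s₁: i.e. if det(γ_s'(0), γ_s''(0), γ_s'''(0)) = 0 to first order in s, then b₃s₂ − c₃s₁ = 0. Concretely: det evaluated at (t,s) = (0,s) equals 12a₂(b₃s₂ − c₃s₁) + O(|s|²). -/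

import Mathlib

noncomputable section
open scoped RealInnerProductSpace
open Filter Asymptotics

/-- ℝ³ as a Euclidean space. -/
abbrev E3 := EuclideanSpace ℝ (Fin 3)

/-- The point (x,y,z) of ℝ³. -/
def mk3 (x y z : ℝ) : E3 := (WithLp.equiv 2 (Fin 3 → ℝ)).symm ![x, y, z]

/-- Cross product on ℝ³. -/
def cross3 (u v : E3) : E3 :=
  mk3 (u 1 * v 2 - u 2 * v 1) (u 2 * v 0 - u 0 * v 2) (u 0 * v 1 - u 1 * v 0)

/-- Determinant of three vectors of ℝ³ (scalar triple product). -/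
def det3 (u v w : E3) : ℝ :=
  u 0 * (v 1 * w 2 - v 2 * w 1) - u 1 * (v 0 * w 2 - v 2 * w 0) +
    u 2 * (v 0 * w 1 - v 1 * w 0)

/-- The 2-parameter deformation γ_s of the space cusp
γ₀(t) = (a₂t² + a₃t³, b₃t³ + b₄t⁴, c₃t³ + c₄t⁴). -/
def cuspFam (a₂ a₃ b₃ b₄ c₃ c₄ : ℝ) (s : ℝ × ℝ) : ℝ → E3 := fun t =>
  mk3 (a₂ * t ^ 2 + a₃ * t ^ 3) (s.1 * t + b₃ * t ^ 3 + b₄ * t ^ 4)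
    (s.2 * t + c₃ * t ^ 3 + c₄ * t ^ 4)

lemma mk3_decomp (x y z : ℝ) : mk3 x y z = x • mk3 1 0 0 + y • mk3 0 1 0 + z • mk3 0 0 1 := by
  ext i; fin_cases i <;> simp [mk3]

lemma hasDerivAt_mk3 {f g h : ℝ → ℝ} {f' g' h' t : ℝ} (hf : HasDerivAt f f' t)
    (hg : HasDerivAt g g' t) (hh : HasDerivAt h h' t) :
    HasDerivAt (fun t => mk3 (f t) (g t) (h t)) (mk3 f' g' h') t := by
  have hFG : (fun t => mk3 (f t) (g t) (h t)) =
      fun t => f t • mk3 1 0 0 + g t • mk3 0 1 0 + h t • mk3 0 0 1 :=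
    funext fun t => mk3_decomp _ _ _
  rw [hFG, mk3_decomp f' g' h']
  exact ((hf.smul_const _).add (hg.smul_const _)).add (hh.smul_const _)

/-- For the family γ_s above (a₂ ≠ 0, b₃ ≠ 0),
det(γ_s'(0), γ_s''(0), γ_s'''(0)) = 12a₂(b₃s₂ − c₃s₁); in particular it vanishes iff
b₃s₂ − c₃s₁ = 0, so the flattening stratum at first order is the line s₂ = (c₃/b₃)s₁. -/
theorem flattening_stratum_of_cusp_family
    (a₂ a₃ b₃ b₄ c₃ c₄ : ℝ) (ha₂ : a₂ ≠ 0) (hb₃ : b₃ ≠ 0) :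
    ∀ s : ℝ × ℝ,
      det3 (deriv (cuspFam a₂ a₃ b₃ b₄ c₃ c₄ s) 0)
          (iteratedDeriv 2 (cuspFam a₂ a₃ b₃ b₄ c₃ c₄ s) 0)
          (iteratedDeriv 3 (cuspFam a₂ a₃ b₃ b₄ c₃ c₄ s) 0) =
        12 * a₂ * (b₃ * s.2 - c₃ * s.1) ∧
      (det3 (deriv (cuspFam a₂ a₃ b₃ b₄ c₃ c₄ s) 0)
          (iteratedDeriv 2 (cuspFam a₂ a₃ b₃ b₄ c₃ c₄ s) 0)
          (iteratedDeriv 3 (cuspFam a₂ a₃ b₃ b₄ c₃ c₄ s) 0) = 0 ↔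
        b₃ * s.2 - c₃ * s.1 = 0) := by
  intro s
  set F := cuspFam a₂ a₃ b₃ b₄ c₃ c₄ s with hF
  -- derivative chain
  have h1 : deriv F = fun t =>
      mk3 (2*a₂*t + 3*a₃*t^2) (s.1 + 3*b₃*t^2 + 4*b₄*t^3) (s.2 + 3*c₃*t^2 + 4*c₄*t^3) := by
    funext t
    refine HasDerivAt.deriv ?_
    apply hasDerivAt_mk3
    · have := ((hasDerivAt_pow 2 t).const_mul a₂).add ((hasDerivAt_pow 3 t).const_mul a₃)
      exact this.congr_deriv (by push_cast; ring)
    · have := (((hasDerivAt_id t).const_mul s.1).add ((hasDerivAt_pow 3 t).const_mul b₃)).add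
        ((hasDerivAt_pow 4 t).const_mul b₄)
      exact this.congr_deriv (by push_cast; ring)
    · have := (((hasDerivAt_id t).const_mul s.2).add ((hasDerivAt_pow 3 t).const_mul c₃)).add
        ((hasDerivAt_pow 4 t).const_mul c₄)
      exact this.congr_deriv (by push_cast; ring)
  have h2 : deriv (deriv F) = fun t =>
      mk3 (2*a₂ + 6*a₃*t) (6*b₃*t + 12*b₄*t^2) (6*c₃*t + 12*c₄*t^2) := by
    rw [h1]; funext t
    refine HasDerivAt.deriv ?_
    apply hasDerivAt_mk3
    · have := ((hasDerivAt_id t).const_mul (2*a₂)).add ((hasDerivAt_pow 2 t).const_mul (3*a₃))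
      exact this.congr_deriv (by push_cast; ring)
    · have := ((hasDerivAt_const t s.1).add ((hasDerivAt_pow 2 t).const_mul (3*b₃))).add
        ((hasDerivAt_pow 3 t).const_mul (4*b₄))
      exact this.congr_deriv (by push_cast; ring)
    · have := ((hasDerivAt_const t s.2).add ((hasDerivAt_pow 2 t).const_mul (3*c₃))).add
        ((hasDerivAt_pow 3 t).const_mul (4*c₄))
      exact this.congr_deriv (by push_cast; ring)
  have h3 : deriv (deriv (deriv F)) = fun t =>
      mk3 (6*a₃) (6*b₃ + 24*b₄*t) (6*c₃ + 24*c₄*t) := by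
    rw [h2]; funext t
    refine HasDerivAt.deriv ?_
    apply hasDerivAt_mk3
    · have := (hasDerivAt_const t (2*a₂)).add ((hasDerivAt_id t).const_mul (6*a₃))
      exact this.congr_deriv (by ring)
    · have := ((hasDerivAt_id t).const_mul (6*b₃)).add ((hasDerivAt_pow 2 t).const_mul (12*b₄))
      exact this.congr_deriv (by push_cast; ring)
    · have := ((hasDerivAt_id t).const_mul (6*c₃)).add ((hasDerivAt_pow 2 t).const_mul (12*c₄))
      exact this.congr_deriv (by push_cast; ring)
  have e2 : iteratedDeriv 2 F = deriv (deriv F) := by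
    rw [iteratedDeriv_succ, iteratedDeriv_one]
  have e3 : iteratedDeriv 3 F = deriv (deriv (deriv F)) := by
    rw [iteratedDeriv_succ, e2]
  have hd : det3 (deriv F 0) (iteratedDeriv 2 F 0) (iteratedDeriv 3 F 0) =
      12 * a₂ * (b₃ * s.2 - c₃ * s.1) := by
    rw [e2, e3, h3, h2, h1]
    simp only [det3, mk3, WithLp.equiv_symm_apply, PiLp.toLp_apply, Matrix.cons_val_zero,
      Matrix.cons_val_one, Matrix.head_cons, Matrix.cons_val_two, Matrix.tail_cons]
    ring
  refine ⟨hd, ?_⟩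
  rw [hd]
  simp [mul_eq_zero, ha₂]
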